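/- The function ψ₀(x) = exp(-(3/16)x² + (1/8)x⁴ - (1/6)x⁶) satisfies -ψ₀''(x) + ((105/64)x² - (43/8)x⁴ + x⁶ - x⁸ + x¹⁰)ψ₀(x) = (3/8)ψ₀(x) for all real x. -/

import Mathlib

private lemma hd1 (x : ℝ) :
    HasDerivAt (fun x : ℝ => Real.exp (-(3/16) * x ^ 2 + (1/8) * x ^ 4 - (1/6) * x ^ 6))
      ((-(3/8) * x + (1/2) * x ^ 3 - x ^ 5) *
        Real.exp (-(3/16) * x ^ 2 + (1/8) * x ^ 4 - (1/6) * x ^ 6)) x := by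
  have hp : HasDerivAt (fun x : ℝ => -(3/16) * x ^ 2 + (1/8) * x ^ 4 - (1/6) * x ^ 6)
      (-(3/8) * x + (1/2) * x ^ 3 - x ^ 5) x := by
    have := (((hasDerivAt_pow 2 x).const_mul (-(3/16) : ℝ)).add
      ((hasDerivAt_pow 4 x).const_mul ((1/8) : ℝ))).sub
      ((hasDerivAt_pow 6 x).const_mul ((1/6) : ℝ))
    refine this.congr_deriv ?_
    ring
  simpa [mul_comm] using hp.exp

theorem decatic_example_ground_state
    (ψ : ℝ → ℝ)
    (hψ : ψ = fun x => Real.exp (-(3/16) * x ^ 2 + (1/8) * x ^ 4 - (1/6) * x ^ 6)) :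
    ∀ x : ℝ, -(deriv (deriv ψ) x)
      + ((105/64) * x ^ 2 - (43/8) * x ^ 4 + x ^ 6 - x ^ 8 + x ^ 10) * ψ x
      = (3/8) * ψ x := by
  subst hψ
  intro x
  have hderiv : deriv (fun x : ℝ => Real.exp (-(3/16) * x ^ 2 + (1/8) * x ^ 4 - (1/6) * x ^ 6))
      = fun x => (-(3/8) * x + (1/2) * x ^ 3 - x ^ 5) *
        Real.exp (-(3/16) * x ^ 2 + (1/8) * x ^ 4 - (1/6) * x ^ 6) := by
    funext y; exact (hd1 y).deriv
  rw [hderiv]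
  have hq : HasDerivAt (fun x : ℝ => -(3/8) * x + (1/2) * x ^ 3 - x ^ 5)
      (-(3/8) + (3/2) * x ^ 2 - 5 * x ^ 4) x := by
    have := (((hasDerivAt_id x).const_mul (-(3/8) : ℝ)).add
      ((hasDerivAt_pow 3 x).const_mul ((1/2) : ℝ))).sub (hasDerivAt_pow 5 x)
    refine this.congr_deriv ?_
    ring
  have h2 := hq.mul (hd1 x)
  erw [h2.deriv]
  have he : Real.exp (-(3/16) * x ^ 2 + (1/8) * x ^ 4 - (1/6) * x ^ 6) > 0 := Real.exp_pos _
  ring
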